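/- Let a, b be non-zero rational numbers and η, θ roots of unity such that α = aη + bθ generates the field ℚ(√5), i.e., ℚ(α) = ℚ(√5). Then after possibly swapping (a,η) and (b,θ) and possibly replacing (a,η) by (−a,−η) and/or (b,θ) by (−b,−θ): η is a primitive 5th root of unity, θ = η⁻¹, and a = b. -/

import Mathlib

open IntermediateField Polynomial

noncomputable section
set_option synthInstance.maxHeartbeats 400000
set_option maxHeartbeats 1000000

private lemma ratC_mem (K : IntermediateField ℚ ℂ) (q : ℚ) : ((q : ℂ)) ∈ K :=
  SubfieldClass.ratCast_mem K q

private lemma two_mem (K : IntermediateField ℚ ℂ) : (2 : ℂ) ∈ K := by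
  have := ratC_mem K 2; exact_mod_cast this

private lemma root_norm_one {z : ℂ} {n : ℕ} (hn : 0 < n) (h : z ^ n = 1) : ‖z‖ = 1 := by
  have h1 : ‖z‖ ^ n = 1 := by rw [← norm_pow, h, norm_one]
  have h0 : 0 ≤ ‖z‖ := norm_nonneg z
  rcases lt_trichotomy ‖z‖ 1 with hlt | heq | hgt
  · have := pow_lt_one₀ h0 hlt hn.ne'
    rw [h1] at this; exact absurd this (lt_irrefl 1)
  · exact heq
  · have := one_lt_pow₀ hgt hn.ne'
    rw [h1] at this; exact absurd this (lt_irrefl 1)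

private lemma root_conj {z : ℂ} {n : ℕ} (hn : 0 < n) (h : z ^ n = 1) :
    (starRingEnd ℂ) z = z⁻¹ := (Complex.inv_eq_conj (root_norm_one hn h)).symm

private lemma root_ne_zero {z : ℂ} {n : ℕ} (hn : 0 < n) (h : z ^ n = 1) : z ≠ 0 := by
  intro h0; rw [h0, zero_pow hn.ne'] at h; exact zero_ne_one h

private lemma root_orderOf_pos {z : ℂ} {n : ℕ} (hn : 0 < n) (h : z ^ n = 1) : 0 < orderOf z :=
  (isOfFinOrder_iff_pow_eq_one.mpr ⟨n, hn, h⟩).orderOf_pos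

private lemma finrank_adjoin_prim {z : ℂ} {n : ℕ} (hn : 0 < n) (hz : IsPrimitiveRoot z n) :
    Module.finrank ℚ (IntermediateField.adjoin ℚ ({z} : Set ℂ)) = n.totient := by
  have hint : IsIntegral ℚ z := (hz.isIntegral hn).tower_top
  rw [IntermediateField.adjoin.finrank hint, ← Polynomial.cyclotomic_eq_minpoly_rat hz hn,
    Polynomial.natDegree_cyclotomic]

private lemma tot_le_of_mem {K : IntermediateField ℚ ℂ} [FiniteDimensional ℚ K]
    {z : ℂ} {n : ℕ} (hn : 0 < n) (hz : IsPrimitiveRoot z n) (hmem : z ∈ K) :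
    n.totient ≤ Module.finrank ℚ K := by
  rw [← finrank_adjoin_prim hn hz]
  have hle : IntermediateField.adjoin ℚ ({z} : Set ℂ) ≤ K :=
    IntermediateField.adjoin_le_iff.mpr (by simpa using hmem)
  haveI : Module.Finite ℚ (Subalgebra.toSubmodule K.toSubalgebra) :=
    (inferInstanceAs (FiniteDimensional ℚ K))
  exact Submodule.finrank_mono
    (show Subalgebra.toSubmodule (IntermediateField.adjoin ℚ ({z} : Set ℂ)).toSubalgebra ≤
      Subalgebra.toSubmodule K.toSubalgebra from hle)

private lemma totient_le_four_dvd {n : ℕ} (hn : n ≠ 0) (h : n.totient ≤ 4) : n ∣ 120 := by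
  have hnp : 0 < n := Nat.pos_of_ne_zero hn
  have key : ∀ m : ℕ, m ∣ n → m.totient ≤ 4 := by
    intro m hm
    exact le_trans (Nat.le_of_dvd (Nat.totient_pos.mpr hnp) (Nat.totient_dvd_of_dvd hm)) h
  rw [← Nat.factorization_le_iff_dvd hn (by norm_num)]
  rw [Finsupp.le_def]
  intro p
  by_cases hp : p ∈ n.primeFactors
  · have hpp : p.Prime := Nat.prime_of_mem_primeFactors hp
    have hpd : p ∣ n := Nat.dvd_of_mem_primeFactors hp
    have hple : p ≤ 5 := by
      have := key p hpd
      rw [Nat.totient_prime hpp] at this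
      omega
    have hp2 : 2 ≤ p := hpp.two_le
    interval_cases p
    · -- p = 2
      have hkle : n.factorization 2 ≤ 3 := by
        by_contra hk4
        have h16 : (16 : ℕ) ∣ n :=
          dvd_trans (show (16:ℕ) ∣ 2 ^ n.factorization 2 by
            rw [show (16:ℕ) = 2 ^ 4 by norm_num]; exact pow_dvd_pow 2 (by omega))
            (Nat.ordProj_dvd n 2)
        have := key 16 h16
        rw [show Nat.totient 16 = 8 from by decide] at this
        omega
      have h3 : 3 ≤ (120 : ℕ).factorization 2 :=
        (Nat.Prime.pow_dvd_iff_le_factorization Nat.prime_two (by norm_num)).mp (by norm_num)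
      omega
    · -- p = 3
      have hkle : n.factorization 3 ≤ 1 := by
        by_contra hk2
        have h9 : (9 : ℕ) ∣ n :=
          dvd_trans (show (9:ℕ) ∣ 3 ^ n.factorization 3 by
            rw [show (9:ℕ) = 3 ^ 2 by norm_num]; exact pow_dvd_pow 3 (by omega))
            (Nat.ordProj_dvd n 3)
        have := key 9 h9
        rw [show Nat.totient 9 = 6 from by decide] at this
        omega
      have h1 : 1 ≤ (120 : ℕ).factorization 3 :=
        (Nat.Prime.pow_dvd_iff_le_factorization Nat.prime_three (by norm_num)).mp (by norm_num)
      omega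
    · exact absurd hpp (by norm_num)
    · -- p = 5
      have hkle : n.factorization 5 ≤ 1 := by
        by_contra hk2
        have h25 : (25 : ℕ) ∣ n :=
          dvd_trans (show (25:ℕ) ∣ 5 ^ n.factorization 5 by
            rw [show (25:ℕ) = 5 ^ 2 by norm_num]; exact pow_dvd_pow 5 (by omega))
            (Nat.ordProj_dvd n 5)
        have := key 25 h25
        rw [show Nat.totient 25 = 20 from by decide] at this
        omega
      have h1 : 1 ≤ (120 : ℕ).factorization 5 :=
        (Nat.Prime.pow_dvd_iff_le_factorization (by norm_num) (by norm_num)).mp (by norm_num)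
      omega
  · have h0 : n.factorization p = 0 := by
      rw [← Nat.support_factorization] at hp
      exact Finsupp.notMem_support_iff.mp hp
    omega



/-- A complex number is a root of unity if some positive power of it equals 1. -/
def IsRootOfUnity (z : ℂ) : Prop := ∃ n : ℕ, 0 < n ∧ z ^ n = 1

/-- `(a', η')` is obtained from `(a, η)` by possibly replacing it with `(-a, -η)`. -/
def SignAdj (a : ℚ) (η : ℂ) (a' : ℚ) (η' : ℂ) : Prop :=
  (a' = a ∧ η' = η) ∨ (a' = -a ∧ η' = -η)

/-- `(a', η', b', θ')` is obtained from `(a, η, b, θ)` by possibly swapping the two pairs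
and possibly changing signs of each pair. -/
def Adjust (a b : ℚ) (η θ : ℂ) (a' b' : ℚ) (η' θ' : ℂ) : Prop :=
  (SignAdj a η a' η' ∧ SignAdj b θ b' θ') ∨ (SignAdj a η b' θ' ∧ SignAdj b θ a' η')
private abbrev sqrt5C : ℂ := ((Real.sqrt 5 : ℝ) : ℂ)

private lemma sqrt5C_sq : sqrt5C ^ 2 = 5 := by
  unfold sqrt5C
  rw [← Complex.ofReal_pow, Real.sq_sqrt (by norm_num : (5:ℝ) ≥ 0)]
  norm_num

private lemma prim5_quartic {w : ℂ} (hw : IsPrimitiveRoot w 5) :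
    w ^ 4 + w ^ 3 + w ^ 2 + w + 1 = 0 := by
  have h5 : w ^ 5 = 1 := hw.pow_eq_one
  have h1 : w ≠ 1 := hw.ne_one (by norm_num)
  have hfac : (w - 1) * (w ^ 4 + w ^ 3 + w ^ 2 + w + 1) = 0 := by
    linear_combination h5
  rcases mul_eq_zero.mp hfac with h | h
  · exact absurd (sub_eq_zero.mp h) h1
  · exact h

private lemma prim5_gauss {w : ℂ} (hw : IsPrimitiveRoot w 5) :
    (2 * (w + w⁻¹) + 1) ^ 2 = 5 := by
  have h5 : w ^ 5 = 1 := hw.pow_eq_one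
  have hinv : w⁻¹ = w ^ 4 := inv_eq_of_mul_eq_one_right (by linear_combination h5)
  rw [hinv]
  have hq := prim5_quartic hw
  linear_combination (4*w^3 + 8) * h5 + 4 * hq

private lemma sqrt5_mem {K : IntermediateField ℚ ℂ} {w : ℂ} (hw : IsPrimitiveRoot w 5)
    (hwK : w ∈ K) : sqrt5C ∈ K := by
  have hs : w + w⁻¹ ∈ K := K.add_mem hwK (K.inv_mem hwK)
  have hfac : (sqrt5C - (2 * (w + w⁻¹) + 1)) * (sqrt5C + (2 * (w + w⁻¹) + 1)) = 0 := by
    have h1 := prim5_gauss hw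
    have h2 := sqrt5C_sq
    linear_combination h2 - h1
  rcases mul_eq_zero.mp hfac with h | h
  · have : sqrt5C = 2 * (w + w⁻¹) + 1 := by linear_combination h
    rw [this]
    exact K.add_mem (K.mul_mem (two_mem K) hs) K.one_mem
  · have : sqrt5C = -(2 * (w + w⁻¹) + 1) := by linear_combination h
    rw [this]
    exact K.neg_mem (K.add_mem (K.mul_mem (two_mem K) hs) K.one_mem)

private lemma quad_ext_totient {K : IntermediateField ℚ ℂ} [FiniteDimensional ℚ K]
    {x s : ℂ} (hs : s ∈ K) (hx2 : x ^ 2 - s * x + 1 = 0) (hxint : IsIntegral ℚ x)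
    {z : ℂ} {m : ℕ} (hm : 0 < m) (hz : IsPrimitiveRoot z m)
    (hzmem : z ∈ (IntermediateField.adjoin (↥K) ({x} : Set ℂ)).restrictScalars ℚ) :
    m.totient ≤ Module.finrank ℚ K * 2 := by
  have hxK : IsIntegral (↥K) x := hxint.tower_top
  set E := IntermediateField.adjoin (↥K) ({x} : Set ℂ) with hE
  haveI : FiniteDimensional (↥K) E := IntermediateField.adjoin.finiteDimensional hxK
  have hdeg : Module.finrank (↥K) E ≤ 2 := by
    rw [IntermediateField.adjoin.finrank hxK]
    have hq2 : (C (1:↥K) * X ^ 2 + C (-(⟨s, hs⟩ : ↥K)) * X + C 1).natDegree = 2 :=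
      Polynomial.natDegree_quadratic one_ne_zero
    have hdvd : minpoly (↥K) x ∣ (C (1:↥K) * X ^ 2 + C (-(⟨s, hs⟩ : ↥K)) * X + C 1) := by
      apply minpoly.dvd
      have halg : ∀ y : ↥K, (algebraMap (↥K) ℂ) y = (y : ℂ) := fun y => rfl
      simp only [map_add, map_mul, map_pow, aeval_C, aeval_X, map_one, map_neg, halg]
      push_cast
      linear_combination hx2
    calc (minpoly (↥K) x).natDegree ≤ _ := Polynomial.natDegree_le_of_dvd hdvd (by
          intro hzero; rw [hzero] at hq2; simp at hq2)
      _ = 2 := hq2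
  haveI : FiniteDimensional ℚ (E.restrictScalars ℚ) :=
    Module.Finite.trans (R := ℚ) (↥K) (↥E)
  have hle := tot_le_of_mem (K := E.restrictScalars ℚ) hm hz hzmem
  have hmul : Module.finrank ℚ (E.restrictScalars ℚ) =
      Module.finrank ℚ (↥K) * Module.finrank (↥K) (↥E) :=
    (Module.finrank_mul_finrank ℚ (↥K) (↥E)).symm
  rw [hmul] at hle
  calc m.totient ≤ Module.finrank ℚ (↥K) * Module.finrank (↥K) (↥E) := hle
    _ ≤ Module.finrank ℚ K * 2 := Nat.mul_le_mul_left _ hdeg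

private lemma no_sqrt5 {z : ℂ} {N : ℕ} (hN : 0 < N) (h5 : ¬ (5 ∣ N))
    (hz : IsPrimitiveRoot z N)
    (hmem : sqrt5C ∈ IntermediateField.adjoin ℚ ({z} : Set ℂ)) : False := by
  set K := IntermediateField.adjoin ℚ ({z} : Set ℂ) with hK
  haveI : FiniteDimensional ℚ K :=
    IntermediateField.adjoin.finiteDimensional ((hz.isIntegral hN).tower_top)
  have hw : IsPrimitiveRoot (Complex.exp (2 * Real.pi * Complex.I / 5)) 5 :=
    Complex.isPrimitiveRoot_exp 5 (by norm_num)
  set w := Complex.exp (2 * Real.pi * Complex.I / 5) with hwdef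
  have hsK : w + w⁻¹ ∈ K := by
    have hfac : (2 * (w + w⁻¹) + 1 - sqrt5C) * (2 * (w + w⁻¹) + 1 + sqrt5C) = 0 := by
      linear_combination prim5_gauss hw - sqrt5C_sq
    rcases mul_eq_zero.mp hfac with h | h
    · have : w + w⁻¹ = (sqrt5C - 1) / 2 := by
        linear_combination h / 2
      rw [this]
      exact K.div_mem (K.sub_mem hmem K.one_mem) (two_mem K)
    · have : w + w⁻¹ = (-sqrt5C - 1) / 2 := by
        linear_combination h / 2
      rw [this]
      exact K.div_mem (K.sub_mem (K.neg_mem hmem) K.one_mem) (two_mem K)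
  have hwne : w ≠ 0 := root_ne_zero (by norm_num) hw.pow_eq_one
  have hx2 : w ^ 2 - (w + w⁻¹) * w + 1 = 0 := by
    field_simp
    ring
  have hcop : Nat.Coprime N 5 :=
    ((Nat.Prime.coprime_iff_not_dvd (by norm_num : Nat.Prime 5)).mpr h5).symm
  -- primitive lcm root z'
  have hz' := hz.pow_mul_pow_lcm hw hN.ne' (by norm_num : (5:ℕ) ≠ 0)
  set z' := z ^ (N / Nat.factorizationLCMLeft N 5) * w ^ (5 / Nat.factorizationLCMRight N 5)
    with hz'def
  have hlcm : Nat.lcm N 5 = N * 5 := hcop.lcm_eq_mul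
  -- z' lies in K(w)
  have hzE : z ∈ IntermediateField.adjoin (↥K) ({w} : Set ℂ) := by
    have hzK : z ∈ K := IntermediateField.subset_adjoin ℚ _ rfl
    have := (IntermediateField.adjoin (↥K) ({w} : Set ℂ)).algebraMap_mem ⟨z, hzK⟩
    exact this
  have hwE : w ∈ IntermediateField.adjoin (↥K) ({w} : Set ℂ) :=
    IntermediateField.subset_adjoin _ _ rfl
  have hz'E : z' ∈ (IntermediateField.adjoin (↥K) ({w} : Set ℂ)).restrictScalars ℚ := by
    exact mul_mem (pow_mem hzE _) (pow_mem hwE _)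
  have hq := quad_ext_totient hsK hx2 ((hw.isIntegral (by norm_num : (0:ℕ) < 5)).tower_top : IsIntegral ℚ w)
    (m := Nat.lcm N 5) (Nat.lcm_pos hN (by norm_num)) hz' hz'E
  have hfr : Module.finrank ℚ K = N.totient := finrank_adjoin_prim hN hz
  rw [hfr, hlcm, Nat.totient_mul hcop, (by decide : Nat.totient 5 = 4)] at hq
  have hpos : 0 < N.totient := Nat.totient_pos.mpr hN
  omega

private lemma indep5 {u : ℂ} (hu : IsPrimitiveRoot u 5) {c0 c1 c2 c3 : ℚ}
    (h : (c0:ℂ) + (c1:ℂ) * u + (c2:ℂ) * u^2 + (c3:ℂ) * u^3 = 0) :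
    c0 = 0 ∧ c1 = 0 ∧ c2 = 0 ∧ c3 = 0 := by
  set p : Polynomial ℚ := C c0 + C c1 * X + C c2 * X^2 + C c3 * X^3 with hp
  have haev : (Polynomial.aeval u) p = 0 := by
    rw [hp]
    simp only [map_add, map_mul, map_pow, aeval_C, aeval_X]
    rw [show (algebraMap ℚ ℂ) c0 = (c0:ℂ) from rfl, show (algebraMap ℚ ℂ) c1 = (c1:ℂ) from rfl,
      show (algebraMap ℚ ℂ) c2 = (c2:ℂ) from rfl, show (algebraMap ℚ ℂ) c3 = (c3:ℂ) from rfl]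
    exact h
  have hp0 : p = 0 := by
    by_contra hp0
    have hdvd : minpoly ℚ u ∣ p := minpoly.dvd _ _ haev
    have hdeg : (minpoly ℚ u).natDegree ≤ p.natDegree := Polynomial.natDegree_le_of_dvd hdvd hp0
    have hmin : (minpoly ℚ u).natDegree = 4 := by
      rw [← Polynomial.cyclotomic_eq_minpoly_rat hu (by norm_num), Polynomial.natDegree_cyclotomic]
      decide
    have hple : p.natDegree ≤ 3 := by
      rw [hp]
      compute_degree
    omega
  have hc : ∀ i : ℕ, p.coeff i = 0 := by intro i; rw [hp0]; simp
  have h0 := hc 0; have h1 := hc 1; have h2 := hc 2; have h3 := hc 3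
  rw [hp] at h0 h1 h2 h3
  simp [Polynomial.coeff_add, Polynomial.coeff_C_mul, Polynomial.coeff_X_pow,
    Polynomial.coeff_C] at h0 h1 h2 h3
  exact ⟨h0, h1, h2, h3⟩

private lemma neg_orderOf_five {x : ℂ} (h10 : orderOf x = 10) : orderOf (-x) = 5 := by
  haveI : Fact (Nat.Prime 5) := ⟨by norm_num⟩
  have hx10 : x ^ 10 = 1 := by rw [← h10]; exact pow_orderOf_eq_one x
  have hx5 : x ^ 5 = -1 := by
    have hsq : (x ^ 5 - 1) * (x ^ 5 + 1) = 0 := by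
      have h1 : (x ^ 5) ^ 2 = 1 := by rw [← pow_mul]; exact hx10
      linear_combination h1
    rcases mul_eq_zero.mp hsq with h | h
    · exfalso
      have h1 : x ^ 5 = 1 := sub_eq_zero.mp h
      have h2 := orderOf_dvd_of_pow_eq_one h1
      rw [h10] at h2
      omega
    · linear_combination h
  apply orderOf_eq_prime
  · rw [show ((-x) ^ 5 : ℂ) = -(x^5) by ring, hx5]; ring
  · intro hne1
    have hx1 : x = -1 := by linear_combination -hne1
    rw [hx1, orderOf_neg_one] at h10
    revert h10
    norm_num [ringChar.eq_zero]

theorem combination_generating_sqrt5 (a b : ℚ) (ha : a ≠ 0) (hb : b ≠ 0)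
    (η θ : ℂ) (hη : IsRootOfUnity η) (hθ : IsRootOfUnity θ)
    (hfield : IntermediateField.adjoin ℚ {(a : ℂ) * η + (b : ℂ) * θ} =
      IntermediateField.adjoin ℚ {((Real.sqrt 5 : ℝ) : ℂ)}) :
    ∃ (a' b' : ℚ) (η' θ' : ℂ), Adjust a b η θ a' b' η' θ' ∧
      IsPrimitiveRoot η' 5 ∧ θ' = η'⁻¹ ∧ a' = b' := by
  classical
  obtain ⟨nη, hnη, hηpow⟩ := hη
  obtain ⟨nθ, hnθ, hθpow⟩ := hθ
  have hfield' : IntermediateField.adjoin ℚ ({(a : ℂ) * η + (b : ℂ) * θ} : Set ℂ) =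
      IntermediateField.adjoin ℚ ({sqrt5C} : Set ℂ) := hfield
  set α : ℂ := (a:ℂ) * η + (b:ℂ) * θ with hαdef
  set F : IntermediateField ℚ ℂ := IntermediateField.adjoin ℚ ({α} : Set ℂ) with hF
  have haC : (a:ℂ) ≠ 0 := Rat.cast_ne_zero.mpr ha
  have hbC : (b:ℂ) ≠ 0 := Rat.cast_ne_zero.mpr hb
  have hrealfix : ∀ x ∈ IntermediateField.adjoin ℚ ({sqrt5C} : Set ℂ), (starRingEnd ℂ) x = x := by
    intro x hx
    induction hx using IntermediateField.adjoin_induction with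
    | mem x hx =>
      rw [Set.mem_singleton_iff] at hx
      rw [hx]
      exact Complex.conj_ofReal _
    | algebraMap x => exact map_ratCast _ _
    | add x y hx hy ihx ihy => rw [map_add, ihx, ihy]
    | inv x hx ihx => rw [map_inv₀, ihx]
    | mul x y hx hy ihx ihy => rw [map_mul, ihx, ihy]
  have hαF : α ∈ F := IntermediateField.mem_adjoin_simple_self ℚ α
  have hs5F : sqrt5C ∈ F := by
    rw [hfield']
    exact IntermediateField.mem_adjoin_simple_self ℚ sqrt5C
  have hconjF : ∀ x ∈ F, (starRingEnd ℂ) x = x := by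
    intro x hx
    rw [hfield'] at hx
    exact hrealfix x hx
  have hconjα : (starRingEnd ℂ) α = α := hconjF α hαF
  have hint5 : IsIntegral ℚ sqrt5C :=
    ⟨X^2 - C (5:ℚ), Polynomial.monic_X_pow_sub_C _ (by norm_num), by simp [sqrt5C_sq]⟩
  haveI hFD : FiniteDimensional ℚ F := by
    rw [hfield']
    exact IntermediateField.adjoin.finiteDimensional hint5
  have hfr2 : Module.finrank ℚ F = 2 := by
    rw [hfield', IntermediateField.adjoin.finrank hint5]
    have hdvd : minpoly ℚ sqrt5C ∣ X^2 - C (5:ℚ) := minpoly.dvd _ _ (by simp [sqrt5C_sq])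
    have hne : (X^2 - C (5:ℚ)) ≠ 0 := by
      intro h
      have h2 := congrArg Polynomial.natDegree h
      rw [Polynomial.natDegree_X_pow_sub_C] at h2
      simp at h2
    have hle : (minpoly ℚ sqrt5C).natDegree ≤ 2 := by
      have h2 := Polynomial.natDegree_le_of_dvd hdvd hne
      rwa [Polynomial.natDegree_X_pow_sub_C] at h2
    have hpos : 0 < (minpoly ℚ sqrt5C).natDegree := minpoly.natDegree_pos hint5
    have hne1 : (minpoly ℚ sqrt5C).natDegree ≠ 1 := by
      intro h1
      obtain ⟨q, hq⟩ := (minpoly.natDegree_eq_one_iff).mp h1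
      have hirr : Irrational (Real.sqrt 5) := (by norm_num : Nat.Prime 5).irrational_sqrt
      apply hirr
      refine ⟨q, ?_⟩
      have h3 : ((q:ℝ):ℂ) = ((Real.sqrt 5 : ℝ) : ℂ) := by
        rw [show (((q:ℝ):ℂ)) = algebraMap ℚ ℂ q by push_cast; rfl, hq]
      exact_mod_cast h3
    omega
  have hα_not_rat : ∀ q : ℚ, α ≠ (q:ℂ) := by
    intro q hq
    have hbot : F = ⊥ := by
      rw [hF]
      apply IntermediateField.adjoin_simple_eq_bot_iff.mpr
      rw [IntermediateField.mem_bot]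
      exact ⟨q, hq.symm⟩
    rw [hbot, IntermediateField.finrank_bot] at hfr2
    omega
  have hα0 : α ≠ 0 := by
    intro h
    exact hα_not_rat 0 (by rw [h]; norm_num)
  have hη0 : η ≠ 0 := root_ne_zero hnη hηpow
  have hθ0 : θ ≠ 0 := root_ne_zero hnθ hθpow
  have hconjη : (starRingEnd ℂ) η = η⁻¹ := root_conj hnη hηpow
  have hconjθ : (starRingEnd ℂ) θ = θ⁻¹ := root_conj hnθ hθpow
  have hconjα2 : (a:ℂ) * η⁻¹ + (b:ℂ) * θ⁻¹ = α := by
    have hc : (starRingEnd ℂ) α = (a:ℂ) * η⁻¹ + (b:ℂ) * θ⁻¹ := by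
      rw [hαdef]
      simp only [map_add, map_mul, map_ratCast, hconjη, hconjθ]
    rw [hconjα] at hc
    exact hc.symm
  have hηreal_to_θ : η⁻¹ = η → θ⁻¹ = θ := by
    intro he
    have h1 : (b:ℂ) * (θ⁻¹ - θ) = 0 := by
      have h2 := hconjα2
      rw [hαdef, he] at h2
      linear_combination h2
    rcases mul_eq_zero.mp h1 with h | h
    · exact absurd h hbC
    · linear_combination h
  have hθreal_to_η : θ⁻¹ = θ → η⁻¹ = η := by
    intro he
    have h1 : (a:ℂ) * (η⁻¹ - η) = 0 := by
      have h2 := hconjα2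
      rw [hαdef, he] at h2
      linear_combination h2
    rcases mul_eq_zero.mp h1 with h | h
    · exact absurd h haC
    · linear_combination h
  have hηnr : η⁻¹ ≠ η := by
    intro he
    have hth := hηreal_to_θ he
    have hη2 : η ^ 2 = 1 := by
      have h2 : η * η⁻¹ = 1 := mul_inv_cancel₀ hη0
      rw [he] at h2
      rw [sq]
      exact h2
    have hθ2 : θ ^ 2 = 1 := by
      have h2 : θ * θ⁻¹ = 1 := mul_inv_cancel₀ hθ0
      rw [hth] at h2
      rw [sq]
      exact h2
    have hη1 : η = 1 ∨ η = -1 := by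
      have hf : (η - 1) * (η + 1) = 0 := by linear_combination hη2
      rcases mul_eq_zero.mp hf with h | h
      · exact Or.inl (by linear_combination h)
      · exact Or.inr (by linear_combination h)
    have hθ1 : θ = 1 ∨ θ = -1 := by
      have hf : (θ - 1) * (θ + 1) = 0 := by linear_combination hθ2
      rcases mul_eq_zero.mp hf with h | h
      · exact Or.inl (by linear_combination h)
      · exact Or.inr (by linear_combination h)
    rcases hη1 with h1 | h1 <;> rcases hθ1 with h2 | h2
    · exact hα_not_rat (a + b) (by rw [hαdef, h1, h2]; push_cast; ring)
    · exact hα_not_rat (a - b) (by rw [hαdef, h1, h2]; push_cast; ring)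
    · exact hα_not_rat (-a + b) (by rw [hαdef, h1, h2]; push_cast; ring)
    · exact hα_not_rat (-a - b) (by rw [hαdef, h1, h2]; push_cast; ring)
  have hθnr : θ⁻¹ ≠ θ := fun h => hηnr (hθreal_to_η h)
  have hη2ne : η ^ 2 ≠ 1 := by
    intro h
    exact hηnr (inv_eq_of_mul_eq_one_left (by linear_combination h))
  have hθ2ne : θ ^ 2 ≠ 1 := by
    intro h
    exact hθnr (inv_eq_of_mul_eq_one_left (by linear_combination h))
  -- ρ
  set ρ : ℂ := η * θ⁻¹ with hρdef
  have hρ0 : ρ ≠ 0 := mul_ne_zero hη0 (inv_ne_zero hθ0)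
  have hρpow : ρ ^ (nη * nθ) = 1 := by
    rw [hρdef, mul_pow, inv_pow, pow_mul, hηpow, one_pow, mul_comm nη nθ, pow_mul, hθpow,
      one_pow, inv_one, mul_one]
  have hηθ : η = ρ * θ := by
    rw [hρdef, inv_mul_cancel_right₀ hθ0]
  have hαc : α = ((a:ℂ) * ρ + b) * θ := by
    rw [hαdef, hηθ]
    ring
  have hkeyrel : θ⁻¹ * ((a:ℂ) * ρ⁻¹ + b) = θ * ((a:ℂ) * ρ + b) := by
    have h2 := hconjα2
    rw [hαdef, hηθ, mul_inv] at h2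
    linear_combination h2
  have hρ2ne : ρ ^ 2 ≠ 1 := by
    intro h
    have hρiv : ρ⁻¹ = ρ := inv_eq_of_mul_eq_one_left (by linear_combination h)
    have h1 := hkeyrel
    rw [hρiv] at h1
    have h2 : (θ⁻¹ - θ) * ((a:ℂ) * ρ + b) = 0 := by linear_combination h1
    rcases mul_eq_zero.mp h2 with h3 | h3
    · exact hθnr (by linear_combination h3)
    · exact hα0 (by rw [hαc, h3, zero_mul])
  have hconjρ : (starRingEnd ℂ) ρ = ρ⁻¹ := root_conj (Nat.mul_pos hnη hnθ) hρpow
  have hcne : (a:ℂ) * ρ + b ≠ 0 := by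
    intro h
    have hρval : ρ = ((-b/a : ℚ):ℂ) := by
      push_cast
      field_simp
      linear_combination h
    have hcr : (starRingEnd ℂ) ρ = ρ := by rw [hρval]; exact map_ratCast _ _
    rw [hconjρ] at hcr
    apply hρ2ne
    have h2 : ρ * ρ⁻¹ = 1 := mul_inv_cancel₀ hρ0
    rw [hcr] at h2
    rw [sq]
    exact h2
  set n := orderOf ρ with hn
  have hρprim : IsPrimitiveRoot ρ n := IsPrimitiveRoot.orderOf ρ
  have hn0 : 0 < n := root_orderOf_pos (Nat.mul_pos hnη hnθ) hρpow
  have hρn : ρ ^ n = 1 := pow_orderOf_eq_one ρ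
  have hn3 : 2 < n := by
    by_contra hle
    push_neg at hle
    interval_cases n
    · exact hρ2ne (by rw [pow_one] at hρn; rw [sq, hρn, mul_one])
    · exact hρ2ne hρn
  have hexp : α ^ 2 = (a:ℂ)^2 + (b:ℂ)^2 + (a:ℂ)*(b:ℂ)*(ρ + ρ⁻¹) := by
    have h1 : α^2 = α * ((a:ℂ)*η⁻¹ + (b:ℂ)*θ⁻¹) := by rw [hconjα2, sq]
    rw [h1, hαdef, hρdef]
    field_simp
    ring
  have hμF : ρ + ρ⁻¹ ∈ F := by
    have heq : ρ + ρ⁻¹ = (α^2 - (a:ℂ)^2 - (b:ℂ)^2) * ((a:ℂ)*(b:ℂ))⁻¹ := by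
      rw [hexp]
      field_simp
      ring
    rw [heq]
    exact F.mul_mem (F.sub_mem (F.sub_mem (F.pow_mem hαF 2) (F.pow_mem (ratC_mem F a) 2))
      (F.pow_mem (ratC_mem F b) 2)) (F.inv_mem (F.mul_mem (ratC_mem F a) (ratC_mem F b)))
  have hρint : IsIntegral ℚ ρ := ((hρprim.isIntegral hn0).tower_top : IsIntegral ℚ ρ)
  have hρx2 : ρ^2 - (ρ + ρ⁻¹) * ρ + 1 = 0 := by
    field_simp
    ring
  have hφ4 : n.totient ≤ 4 := by
    have h := quad_ext_totient hμF hρx2 hρint hn0 hρprim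
      ((IntermediateField.mem_restrictScalars ℚ).mpr (IntermediateField.subset_adjoin _ _ rfl))
    rw [hfr2] at h
    omega
  have hn120 : n ∣ 120 := totient_le_four_dvd hn0.ne' hφ4
  have hmemdiv : n ∈ Nat.divisors 120 := Nat.mem_divisors.mpr ⟨hn120, by norm_num⟩
  -- K = ℚ(ρ)
  set K : IntermediateField ℚ ℂ := IntermediateField.adjoin ℚ ({ρ} : Set ℂ) with hK
  haveI : FiniteDimensional ℚ K := IntermediateField.adjoin.finiteDimensional hρint
  have hfrK : Module.finrank ℚ K = n.totient := finrank_adjoin_prim hn0 hρprim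
  have hρK : ρ ∈ K := IntermediateField.subset_adjoin _ _ rfl
  by_cases h5n : 5 ∣ n
  · -- MAIN CASE : n = 5 or 10
    have hn510 : n = 5 ∨ n = 10 := by
      have hlist : ∀ d ∈ Nat.divisors 120, d.totient ≤ 4 → 5 ∣ d → (d = 5 ∨ d = 10) := by decide
      exact hlist n hmemdiv hφ4 h5n
    have hfK4 : Module.finrank ℚ K = 4 := by
      rcases hn510 with h | h <;> rw [hfrK, h] <;> decide
    obtain ⟨ρ5, hρ5prim, hρ5K⟩ : ∃ ρ5, IsPrimitiveRoot ρ5 5 ∧ ρ5 ∈ K := by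
      rcases hn510 with h | h
      · exact ⟨ρ, by rw [← h]; exact hρprim, hρK⟩
      · refine ⟨ρ^2, ?_, K.pow_mem hρK 2⟩
        have h2 := hρprim.pow_of_dvd (two_ne_zero) (by rw [h]; norm_num)
        rw [h] at h2
        norm_num at h2
        exact h2
    have h5K : sqrt5C ∈ K := sqrt5_mem hρ5prim hρ5K
    have hFK : F ≤ K := by
      rw [hfield']
      exact IntermediateField.adjoin_le_iff.mpr (by simpa using h5K)
    have hαK : α ∈ K := hFK hαF
    have hθK : θ ∈ K := by
      have hθval : θ = α / ((a:ℂ) * ρ + b) := by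
        rw [hαc]
        field_simp
      rw [hθval]
      exact K.div_mem hαK (K.add_mem (K.mul_mem (ratC_mem K a) hρK) (ratC_mem K b))
    set m := orderOf θ with hm
    have hm0 : 0 < m := root_orderOf_pos hnθ hθpow
    have hθprim : IsPrimitiveRoot θ m := IsPrimitiveRoot.orderOf θ
    have hφm : m.totient ≤ 4 := by
      have h := tot_le_of_mem hm0 hθprim hθK
      rwa [hfK4] at h
    have hm2 : 2 < m := by
      by_contra hle
      push_neg at hle
      have hmd : m ∣ 2 := by
        interval_cases m
        · exact one_dvd 2
        · exact dvd_rfl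
      exact hθ2ne (orderOf_dvd_iff_pow_eq_one.mp (hm ▸ hmd))
    have h5m : 5 ∣ m := by
      by_contra h5m
      have hcopm : Nat.Coprime m 5 := ((Nat.Prime.coprime_iff_not_dvd (by norm_num)).mpr h5m).symm
      have hzlcm := hθprim.pow_mul_pow_lcm hρ5prim hm0.ne' (by norm_num)
      have hzmem : θ ^ (m / Nat.factorizationLCMLeft m 5) *
          ρ5 ^ (5 / Nat.factorizationLCMRight m 5) ∈ K :=
        mul_mem (pow_mem hθK _) (pow_mem hρ5K _)
      have htot := tot_le_of_mem (Nat.lcm_pos hm0 (by norm_num)) hzlcm hzmem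
      rw [hfK4, hcopm.lcm_eq_mul, Nat.totient_mul hcopm,
        (by decide : Nat.totient 5 = 4)] at htot
      have heven : Even m.totient := Nat.totient_even hm2
      have hpos : 0 < m.totient := Nat.totient_pos.mpr hm0
      obtain ⟨r, hr⟩ := heven
      omega
    have hm510 : m = 5 ∨ m = 10 := by
      have hlist : ∀ d ∈ Nat.divisors 120, d.totient ≤ 4 → 5 ∣ d → (d = 5 ∨ d = 10) := by decide
      exact hlist m (Nat.mem_divisors.mpr ⟨totient_le_four_dvd hm0.ne' hφm, by norm_num⟩) hφm h5m
    have hθ10 : θ ^ 10 = 1 := by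
      apply orderOf_dvd_iff_pow_eq_one.mp
      rw [← hm]
      rcases hm510 with h | h <;> rw [h] <;> norm_num
    have hρ10 : ρ ^ 10 = 1 := by
      apply orderOf_dvd_iff_pow_eq_one.mp
      rw [← hn]
      rcases hn510 with h | h <;> rw [h] <;> norm_num
    have hη10 : η ^ 10 = 1 := by
      rw [hηθ, mul_pow, hρ10, hθ10, mul_one]
    have hηord : orderOf η = 5 ∨ orderOf η = 10 := by
      have hdvd : orderOf η ∣ 10 := orderOf_dvd_of_pow_eq_one hη10
      have hne2 : ¬ (orderOf η ∣ 2) := fun h => hη2ne (orderOf_dvd_iff_pow_eq_one.mp h)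
      have hmemd : orderOf η ∈ Nat.divisors 10 := Nat.mem_divisors.mpr ⟨hdvd, by norm_num⟩
      have hlist10 : ∀ d ∈ Nat.divisors 10, ¬(d ∣ 2) → (d = 5 ∨ d = 10) := by decide
      exact hlist10 _ hmemd hne2
    obtain ⟨a', η', hsa, ha'η', hη'5⟩ :
        ∃ (a':ℚ) (η':ℂ), SignAdj a η a' η' ∧ ((a':ℚ):ℂ) * η' = (a:ℂ) * η ∧ orderOf η' = 5 := by
      rcases hηord with h | h
      · exact ⟨a, η, Or.inl ⟨rfl, rfl⟩, rfl, h⟩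
      · exact ⟨-a, -η, Or.inr ⟨rfl, rfl⟩, by push_cast; ring, neg_orderOf_five h⟩
    obtain ⟨b', θ', hsb, hb'θ', hθ'5⟩ :
        ∃ (b':ℚ) (θ':ℂ), SignAdj b θ b' θ' ∧ ((b':ℚ):ℂ) * θ' = (b:ℂ) * θ ∧ orderOf θ' = 5 := by
      rcases hm510 with h | h
      · exact ⟨b, θ, Or.inl ⟨rfl, rfl⟩, rfl, hm.symm.trans h⟩
      · exact ⟨-b, -θ, Or.inr ⟨rfl, rfl⟩, by push_cast; ring,
          neg_orderOf_five (hm.symm.trans h)⟩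
    have hu : IsPrimitiveRoot η' 5 := by
      have h := IsPrimitiveRoot.orderOf η'
      rwa [hη'5] at h
    have hθ'prim : IsPrimitiveRoot θ' 5 := by
      have h := IsPrimitiveRoot.orderOf θ'
      rwa [hθ'5] at h
    have hαu : α = ((a':ℚ):ℂ) * η' + ((b':ℚ):ℂ) * θ' := by
      rw [hαdef, ha'η', hb'θ']
    haveI : NeZero (5:ℕ) := ⟨by norm_num⟩
    obtain ⟨k, hk5, hku⟩ := hu.eq_pow_of_pow_eq_one hθ'prim.pow_eq_one
    have hu5 : η' ^ 5 = 1 := hu.pow_eq_one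
    have hu0 : η' ≠ 0 := root_ne_zero (by norm_num) hu5
    have hconju : (starRingEnd ℂ) η' = η'⁻¹ := root_conj (by norm_num) hu5
    have huinv : η'⁻¹ = η' ^ 4 := inv_eq_of_mul_eq_one_right (by linear_combination hu5)
    have hQ := prim5_quartic hu
    have hu4u : η' ^ 4 - η' ≠ 0 := by
      intro h
      have h3 : η' ^ 3 = 1 := by
        apply mul_left_cancel₀ hu0
        rw [mul_one]
        linear_combination h
      have h2 : η' ^ 2 = 1 := by
        calc η' ^ 2 = η'^2 * η'^3 := by rw [h3, mul_one]
        _ = η' ^ 5 := by ring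
        _ = 1 := hu5
      have h4 : orderOf η' ∣ 2 := orderOf_dvd_of_pow_eq_one h2
      rw [hη'5] at h4
      omega
    have hαk : α = ((a':ℚ):ℂ) * η' + ((b':ℚ):ℂ) * η'^k := by rw [hαu, hku]
    have hrel : ((a':ℚ):ℂ) * η'^4 + ((b':ℚ):ℂ) * (η'^4)^k
        = ((a':ℚ):ℂ) * η' + ((b':ℚ):ℂ) * η'^k := by
      have hc : ((a':ℚ):ℂ) * η'^4 + ((b':ℚ):ℂ) * (η'^4)^k = α := by
        conv_rhs => rw [← hconjα, hαk]
        simp only [map_add, map_mul, map_pow, map_ratCast, hconju, huinv]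
      rw [hαk] at hc
      exact hc
    have hθ'sq : θ'^2 = θ^2 := by
      rcases hsb with ⟨-, h⟩ | ⟨-, h⟩ <;> rw [h] <;> ring
    have ha'0 : ∀ (h0 : a' = 0), False := by
      intro h0
      rcases hsa with ⟨h1, -⟩ | ⟨h1, -⟩
      · exact ha (h1 ▸ h0)
      · exact ha (neg_eq_zero.mp (h1 ▸ h0))
    interval_cases k
    · -- k = 0
      exfalso
      apply hθ2ne
      rw [← hθ'sq, ← hku]
      norm_num
    · -- k = 1
      exfalso
      have hfac : (((a':ℚ):ℂ) + ((b':ℚ):ℂ)) * (η'^4 - η') = 0 := by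
        rw [pow_one] at hrel
        linear_combination hrel
      rcases mul_eq_zero.mp hfac with h | h
      · apply hα0
        have hb'a : ((b':ℚ):ℂ) = -((a':ℚ):ℂ) := by linear_combination h
        rw [hαk, pow_one, hb'a]
        ring
      · exact hu4u h
    · -- k = 2
      exfalso
      have hE : ((a':ℚ):ℂ) * η'^4 + ((b':ℚ):ℂ) * η'^3
          = ((a':ℚ):ℂ) * η' + ((b':ℚ):ℂ) * η'^2 := by
        linear_combination hrel - ((b':ℚ):ℂ) * η'^3 * hu5
      have hT : (((a'):ℚ):ℂ) + ((2*a' : ℚ):ℂ) * η' + (((a'+b'):ℚ):ℂ) * η'^2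
          + (((a'-b'):ℚ):ℂ) * η'^3 = 0 := by
        push_cast
        linear_combination -hE + ((a':ℚ):ℂ) * hQ
      obtain ⟨h0, -, -, -⟩ := indep5 hu hT
      exact ha'0 h0
    · -- k = 3
      exfalso
      have hE : ((a':ℚ):ℂ) * η'^4 + ((b':ℚ):ℂ) * η'^2
          = ((a':ℚ):ℂ) * η' + ((b':ℚ):ℂ) * η'^3 := by
        linear_combination hrel - ((b':ℚ):ℂ) * η'^2 * (η'^5 + 1) * hu5
      have hT : (((a'):ℚ):ℂ) + ((2*a' : ℚ):ℂ) * η' + (((a'-b'):ℚ):ℂ) * η'^2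
          + (((a'+b'):ℚ):ℂ) * η'^3 = 0 := by
        push_cast
        linear_combination -hE + ((a':ℚ):ℂ) * hQ
      obtain ⟨h0, -, -, -⟩ := indep5 hu hT
      exact ha'0 h0
    · -- k = 4
      refine ⟨a', b', η', θ', Or.inl ⟨hsa, hsb⟩, hu, ?_, ?_⟩
      · rw [← hku, huinv]
      · have hfac : (((a':ℚ):ℂ) - ((b':ℚ):ℂ)) * (η'^4 - η') = 0 := by
          linear_combination hrel - ((b':ℚ):ℂ) * η' * (η'^10 + η'^5 + 1) * hu5
        rcases mul_eq_zero.mp hfac with h | h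
        · exact_mod_cast sub_eq_zero.mp h
        · exact absurd h hu4u
  · -- CONTRADICTION CASE : 5 does not divide n
    exfalso
    have hθsq : θ^2 = ((a:ℂ) * ρ⁻¹ + b) / ((a:ℂ) * ρ + b) := by
      rw [eq_div_iff hcne]
      have h := congrArg (fun t => θ * t) hkeyrel
      rw [← mul_assoc, mul_inv_cancel₀ hθ0, one_mul] at h
      linear_combination -h
    have hyK : θ^2 ∈ K := by
      rw [hθsq]
      exact K.div_mem (K.add_mem (K.mul_mem (ratC_mem K a) (K.inv_mem hρK)) (ratC_mem K b))
        (K.add_mem (K.mul_mem (ratC_mem K a) hρK) (ratC_mem K b))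
    have hypow : (θ^2) ^ nθ = 1 := by
      rw [← pow_mul, mul_comm, pow_mul, hθpow, one_pow]
    set m' := orderOf (θ^2) with hm'
    have hm'0 : 0 < m' := root_orderOf_pos hnθ hypow
    have hyprim : IsPrimitiveRoot (θ^2) m' := IsPrimitiveRoot.orderOf _
    have hφm' : m'.totient ≤ 4 := by
      have h := tot_le_of_mem hm'0 hyprim hyK
      rw [hfrK] at h
      omega
    have h5m' : ¬ (5 ∣ m') := by
      intro hdvd
      have hq5 : m' / 5 ≠ 0 := by
        intro h0
        rcases hdvd with ⟨c, hc⟩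
        rw [hc] at h0
        rw [Nat.mul_div_cancel_left c (by norm_num)] at h0
        rw [hc, h0] at hm'0
        simp at hm'0
      have hy5 : IsPrimitiveRoot ((θ^2) ^ (m'/5)) 5 := by
        have h := hyprim.pow_of_dvd hq5 (Nat.div_dvd_of_dvd hdvd)
        rwa [Nat.div_div_self hdvd hm'0.ne'] at h
      have hcop : Nat.Coprime n 5 := ((Nat.Prime.coprime_iff_not_dvd (by norm_num)).mpr h5n).symm
      have hzlcm := hρprim.pow_mul_pow_lcm hy5 hn0.ne' (by norm_num)
      have hzmem : ρ ^ (n / Nat.factorizationLCMLeft n 5) *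
          ((θ^2)^(m'/5)) ^ (5 / Nat.factorizationLCMRight n 5) ∈ K :=
        mul_mem (pow_mem hρK _) (pow_mem (pow_mem hyK _) _)
      have htot := tot_le_of_mem (Nat.lcm_pos hn0 (by norm_num)) hzlcm hzmem
      rw [hfrK, hcop.lcm_eq_mul, Nat.totient_mul hcop,
        (by decide : Nat.totient 5 = 4)] at htot
      have hpos : 0 < n.totient := Nat.totient_pos.mpr hn0
      omega
    have hm'120 : m' ∣ 120 := totient_le_four_dvd hm'0.ne' hφm'
    have hdvd24 : ∀ d ∈ Nat.divisors 120, ¬ (5 ∣ d) → d ∣ 24 := by decide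
    have hm'24 : m' ∣ 24 := hdvd24 m' (Nat.mem_divisors.mpr ⟨hm'120, by norm_num⟩) h5m'
    have hn24 : n ∣ 24 := hdvd24 n hmemdiv h5n
    have hθ48 : θ ^ 48 = 1 := by
      have h := orderOf_dvd_iff_pow_eq_one.mp (hm' ▸ hm'24 : orderOf (θ^2) ∣ 24)
      rw [← pow_mul] at h
      exact h
    have hρ24 : ρ ^ 24 = 1 := orderOf_dvd_iff_pow_eq_one.mp (hn ▸ hn24 : orderOf ρ ∣ 24)
    have hρ48 : ρ ^ 48 = 1 := by
      rw [show (48:ℕ) = 24*2 by norm_num, pow_mul, hρ24, one_pow]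
    have hη48 : η ^ 48 = 1 := by
      rw [hηθ, mul_pow, hρ48, hθ48, mul_one]
    haveI : NeZero (48:ℕ) := ⟨by norm_num⟩
    have hZ : IsPrimitiveRoot (Complex.exp (2 * Real.pi * Complex.I / 48)) 48 :=
      Complex.isPrimitiveRoot_exp 48 (by norm_num)
    set Z := Complex.exp (2 * Real.pi * Complex.I / 48) with hZdef
    obtain ⟨i, -, hi⟩ := hZ.eq_pow_of_pow_eq_one hη48
    obtain ⟨j, -, hj⟩ := hZ.eq_pow_of_pow_eq_one hθ48
    have hZm : Z ∈ IntermediateField.adjoin ℚ ({Z} : Set ℂ) :=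
      IntermediateField.subset_adjoin _ _ rfl
    have hαZ : α ∈ IntermediateField.adjoin ℚ ({Z} : Set ℂ) := by
      rw [hαdef, ← hi, ← hj]
      exact add_mem (mul_mem (ratC_mem _ a) (pow_mem hZm i))
        (mul_mem (ratC_mem _ b) (pow_mem hZm j))
    have h5Z : sqrt5C ∈ IntermediateField.adjoin ℚ ({Z} : Set ℂ) := by
      have hle : F ≤ IntermediateField.adjoin ℚ ({Z} : Set ℂ) := by
        rw [hF]
        exact IntermediateField.adjoin_le_iff.mpr (by simpa using hαZ)
      exact hle hs5F
    exact no_sqrt5 (by norm_num) (by norm_num) hZ h5Z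

end
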